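/- Let D_1,…,D_m be T×T diagonal complex matrices with diagonal entries d_k(1),…,d_k(T) for matrix D_k, where all the Tm diagonal entries are jointly independent random variables with atomless distributions. Fix T pairwise distinct exponent vectors α_1,…,α_T ∈ ℕ^m. Then the T×T matrix whose j-th column is (∏_{k=1}^m D_k^{α_j(k)})·1 is invertible almost surely. -/

import Mathlib

open MeasureTheory ProbabilityTheory Matrix

/-! ### Auxiliary lemmas -/

lemma prod_monomial_one {ι σ : Type*} (s : Finset ι) (f : ι → (σ →₀ ℕ)) :
    ∏ i ∈ s, MvPolynomial.monomial (f i) (1 : ℝ) =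
      MvPolynomial.monomial (∑ i ∈ s, f i) 1 := by
  classical
  induction s using Finset.induction with
  | empty => simp
  | insert _ _ h ih => simp [Finset.prod_insert h, Finset.sum_insert h, ih, MvPolynomial.monomial_mul]

lemma det_monomial_ne_zero (m T : ℕ) (α : Fin T → Fin m → ℕ) (hα : Function.Injective α) :
    (Matrix.of fun i j : Fin T =>
      ∏ k, (MvPolynomial.X (k, i) : MvPolynomial (Fin m × Fin T) ℝ) ^ (α j k)).det ≠ 0 := by
  classical
  set E : Equiv.Perm (Fin T) → ((Fin m × Fin T) →₀ ℕ) :=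
    fun σ => Finsupp.equivFunOnFinite.symm fun p => α (σ⁻¹ p.2) p.1 with hE
  have hEinj : Function.Injective E := by
    intro σ τ h
    have h' : ∀ p : Fin m × Fin T, α (σ⁻¹ p.2) p.1 = α (τ⁻¹ p.2) p.1 := by
      intro p
      have := congrArg (fun f => Finsupp.equivFunOnFinite f p) h
      simpa [hE] using this
    have h2 : ∀ r, σ⁻¹ r = τ⁻¹ r := by
      intro r
      exact hα (funext fun k => h' (k, r))
    have : σ⁻¹ = τ⁻¹ := Equiv.ext h2
    simpa using congrArg (·⁻¹) this
  have hterm : ∀ σ : Equiv.Perm (Fin T),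
      (∏ i, ∏ k, (MvPolynomial.X (k, σ i) : MvPolynomial (Fin m × Fin T) ℝ) ^ (α i k)) =
        MvPolynomial.monomial (E σ) 1 := by
    intro σ
    have h1 : ∀ i k, (MvPolynomial.X (k, σ i) : MvPolynomial (Fin m × Fin T) ℝ) ^ (α i k) =
        MvPolynomial.monomial (Finsupp.single (k, σ i) (α i k)) 1 :=
      fun i k => MvPolynomial.X_pow_eq_monomial
    simp_rw [h1, prod_monomial_one]
    have hsum : (∑ i : Fin T, ∑ k : Fin m, Finsupp.single (k, σ i) (α i k)) = E σ := by
      refine Finsupp.ext fun p => ?_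
      obtain ⟨k₀, r⟩ := p
      rw [Finsupp.finset_sum_apply]
      have : ∀ i : Fin T, (∑ k, Finsupp.single (k, σ i) (α i k)) (k₀, r)
          = if σ i = r then α i k₀ else 0 := by
        intro i
        rw [Finsupp.finset_sum_apply]
        rw [Finset.sum_eq_single k₀]
        · simp [Finsupp.single_apply, Prod.ext_iff]
        · intro k _ hk
          simp [Finsupp.single_apply, Prod.ext_iff, hk]
        · simp
      simp_rw [this]
      rw [Finset.sum_eq_single (σ⁻¹ r)]
      · simp [hE, Finsupp.equivFunOnFinite]
      · intro i _ hi
        have : σ i ≠ r := fun h => hi (by simp [← h])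
        simp [this]
      · simp
    rw [hsum]
  have hdet : (Matrix.of fun i j : Fin T =>
      ∏ k, (MvPolynomial.X (k, i) : MvPolynomial (Fin m × Fin T) ℝ) ^ (α j k)).det =
      ∑ σ : Equiv.Perm (Fin T),
        (Equiv.Perm.sign σ : ℤ) • MvPolynomial.monomial (E σ) (1:ℝ) := by
    rw [Matrix.det_apply]
    refine Finset.sum_congr rfl fun σ _ => ?_
    rw [← hterm σ]
    rfl
  intro h0
  have hco := congrArg (MvPolynomial.coeff (E 1)) h0
  rw [hdet] at hco
  rw [MvPolynomial.coeff_sum] at hco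
  simp_rw [MvPolynomial.coeff_smul, MvPolynomial.coeff_monomial] at hco
  rw [Finset.sum_eq_single (1 : Equiv.Perm (Fin T))] at hco
  · simp at hco
  · intro σ _ hσ
    rw [if_neg (fun h => hσ (hEinj h))]
    simp
  · simp

lemma measurable_eval_pi {n : Type*} [Fintype n] (p : MvPolynomial n ℝ) :
    Measurable fun x : n → ℝ => MvPolynomial.eval x p :=
  (MvPolynomial.continuous_eval p).measurable

lemma pi_eval_zero_null : ∀ (n : ℕ) (ν : Fin n → Measure ℝ),
    (∀ i, IsProbabilityMeasure (ν i)) → (∀ i, NoAtoms (ν i)) →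
    ∀ p : MvPolynomial (Fin n) ℝ, p ≠ 0 →
    Measure.pi ν {x | MvPolynomial.eval x p = 0} = 0 := by
  intro n
  induction n with
  | zero =>
    intro ν _ _ p hp
    obtain ⟨a, rfl⟩ := MvPolynomial.C_surjective (Fin 0) p
    have ha : a ≠ 0 := fun h => hp (by simp [h])
    have : {x : Fin 0 → ℝ | MvPolynomial.eval x (MvPolynomial.C a) = 0} = ∅ := by
      ext x; simp [ha]
    rw [this]; simp
  | succ n IH =>
    intro ν hprob hatom p hp
    haveI := hprob; haveI := hatom
    set q : Polynomial (MvPolynomial (Fin n) ℝ) := MvPolynomial.finSuccEquiv ℝ n p with hq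
    have hq0 : q ≠ 0 := by
      simp only [hq, ne_eq, EmbeddingLike.map_eq_zero_iff]
      exact hp
    have hlc : q.leadingCoeff ≠ 0 := Polynomial.leadingCoeff_ne_zero.2 hq0
    set T : Set (ℝ × (Fin n → ℝ)) :=
      {z | MvPolynomial.eval (Fin.cons z.1 z.2) p = 0} with hT
    have hTm : MeasurableSet T := by
      have hcons : Measurable fun z : ℝ × (Fin n → ℝ) => (Fin.cons z.1 z.2 : Fin (n+1) → ℝ) := by
        apply measurable_pi_lambda
        intro i
        refine Fin.cases ?_ ?_ i
        · exact measurable_fst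
        · intro j; exact (measurable_pi_apply j).comp measurable_snd
      exact ((measurable_eval_pi p).comp hcons) (measurableSet_singleton 0)
    have MP := measurePreserving_piFinSuccAbove ν 0
    have hpre : (MeasurableEquiv.piFinSuccAbove (fun _ : Fin (n+1) => ℝ) 0) ⁻¹' T =
        {x | MvPolynomial.eval x p = 0} := by
      ext x
      simp only [Set.mem_preimage, hT, Set.mem_setOf_eq, MeasurableEquiv.piFinSuccAbove,
        MeasurableEquiv.coe_mk, Fin.insertNthEquiv, Equiv.coe_fn_symm_mk, Fin.removeNth_zero,
        Fin.cons_self_tail]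
    have key : ((ν 0).prod (Measure.pi fun j => ν (Fin.succAbove 0 j))) T = 0 := by
      rw [Measure.prod_apply_symm hTm]
      have hae : ∀ᵐ y ∂(Measure.pi fun j => ν (Fin.succAbove 0 j)),
          (ν 0) ((fun a => (a, y)) ⁻¹' T) = 0 := by
        have hbad : (Measure.pi fun j => ν (Fin.succAbove 0 j))
            {y | MvPolynomial.eval y q.leadingCoeff = 0} = 0 := by
          have := IH (fun j => ν (Fin.succAbove 0 j)) (fun j => hprob _) (fun j => hatom _)
            q.leadingCoeff hlc
          exact this
        have : ∀ᵐ y ∂(Measure.pi fun j => ν (Fin.succAbove 0 j)),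
            MvPolynomial.eval y q.leadingCoeff ≠ 0 := by
          rw [ae_iff]
          simpa using hbad
        filter_upwards [this] with y hy
        have hqy : Polynomial.map (MvPolynomial.eval y) q ≠ 0 := by
          intro h
          apply hy
          have := Polynomial.coeff_map (p := q) (MvPolynomial.eval y) q.natDegree
          rw [h, Polynomial.coeff_zero] at this
          rw [Polynomial.leadingCoeff]
          exact this.symm
        have hsub : (fun a => (a, y)) ⁻¹' T ⊆
            {a | Polynomial.eval a (Polynomial.map (MvPolynomial.eval y) q) = 0} := by
          intro a ha
          simp only [Set.mem_preimage, hT, Set.mem_setOf_eq] at ha ⊢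
          rw [← MvPolynomial.eval_eq_eval_mv_eval']
          exact ha
        refine measure_mono_null hsub ?_
        haveI : NullSingletonClass (ν 0) := hatom 0
        exact Set.Finite.measure_zero (Polynomial.finite_setOf_isRoot hqy) _
      calc ∫⁻ y, (ν 0) ((fun a => (a, y)) ⁻¹' T) ∂(Measure.pi fun j => ν (Fin.succAbove 0 j))
          = ∫⁻ _, 0 ∂(Measure.pi fun j => ν (Fin.succAbove 0 j)) := lintegral_congr_ae hae
        _ = 0 := lintegral_zero
    have := MP.measure_preimage (hTm.nullMeasurableSet)
    rw [hpre] at this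
    rw [this, key]

lemma pi_eval_zero_null' {ι : Type*} [Fintype ι] (ν : ι → Measure ℝ)
    [∀ i, IsProbabilityMeasure (ν i)] (hatoms : ∀ i, NoAtoms (ν i))
    (p : MvPolynomial ι ℝ) (hp : p ≠ 0) :
    Measure.pi ν {x | MvPolynomial.eval x p = 0} = 0 := by
  classical
  set e : Fin (Fintype.card ι) ≃ ι := (Fintype.equivFin ι).symm with he
  have MP := MeasureTheory.measurePreserving_piCongrLeft (α := fun _ : ι => ℝ) ν e
  have hS : MeasurableSet {x : ι → ℝ | MvPolynomial.eval x p = 0} :=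
    (measurable_eval_pi p) (measurableSet_singleton 0)
  have hpre : (MeasurableEquiv.piCongrLeft (fun _ : ι => ℝ) e) ⁻¹'
      {x : ι → ℝ | MvPolynomial.eval x p = 0} =
      {x : Fin (Fintype.card ι) → ℝ |
        MvPolynomial.eval x (MvPolynomial.rename e.symm p) = 0} := by
    ext x
    simp only [Set.mem_preimage, Set.mem_setOf_eq, MvPolynomial.eval_rename]
    have : ⇑(MeasurableEquiv.piCongrLeft (fun _ : ι => ℝ) e) x = x ∘ e.symm := by
      funext i
      have h1 : (MeasurableEquiv.piCongrLeft (fun _ : ι => ℝ) e) x =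
          (Equiv.piCongrLeft (fun _ : ι => ℝ) e) x := rfl
      rw [h1]
      conv_lhs => rw [show i = e (e.symm i) by simp]
      rw [Equiv.piCongrLeft_apply_apply]
      rfl
    rw [this]
  have hr : MvPolynomial.rename (⇑e.symm) p ≠ 0 := by
    intro h
    apply hp
    have := MvPolynomial.rename_injective (R := ℝ) (⇑e.symm) e.symm.injective
    apply this
    simpa using h
  have := MP.measure_preimage hS.nullMeasurableSet
  rw [hpre] at this
  rw [← this]
  exact pi_eval_zero_null _ (fun j => ν (e j)) (fun j => inferInstance) (fun j => hatoms (e j))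
    _ hr

lemma noncommProd_diag_pow {m T : ℕ} (w : Fin m → Fin T → ℝ) (e : Fin m → ℕ) (comm) :
    Finset.univ.noncommProd (fun k => (Matrix.diagonal (w k)) ^ (e k)) comm
      = Matrix.diagonal (fun i => ∏ k, w k i ^ e k) := by
  classical
  have h1 := Finset.noncommProd_congr (s₁ := (Finset.univ : Finset (Fin m))) rfl
    (f := fun k => (Matrix.diagonal (w k)) ^ (e k))
    (g := fun k => Matrix.diagonalRingHom (Fin T) ℝ ((w k) ^ (e k)))
    (fun k _ => by rw [map_pow]; rfl) comm
  rw [h1]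
  have h2 := Finset.map_noncommProd (Finset.univ : Finset (Fin m))
    (fun k => ((w k) ^ (e k) : Fin T → ℝ)) (fun _ _ _ _ _ => Commute.all _ _)
    (Matrix.diagonalRingHom (Fin T) ℝ)
  rw [← h2, Finset.noncommProd_eq_prod]
  have h3 : (∏ k, (w k) ^ (e k) : Fin T → ℝ) = fun i => ∏ k, w k i ^ e k := by
    funext i
    simp [Finset.prod_apply]
  simp [Matrix.diagonalRingHom, h3]; rfl

/-- Matrix form of the full-rank lemma: for diagonal random matrices
D₁,…,D_m with jointly independent, atomless diagonal entries, and T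
pairwise distinct exponent vectors α₁,…,α_T ∈ ℕ^m, the T×T matrix whose
j-th column is `(∏ₖ Dₖ^{αⱼ(k)})·1` (i.e. with (i,j) entry
`∏ₖ dₖ(i)^{αⱼ(k)}`) is invertible almost surely. -/
theorem monomial_matrix_invertible
    {Ω : Type*} [MeasurableSpace Ω] (μ : Measure Ω) [IsProbabilityMeasure μ]
    (m T : ℕ) (d : Fin m → Fin T → Ω → ℝ)
    (hmeas : ∀ k i, Measurable (d k i))
    (hindep : iIndepFun
      (fun p : Fin m × Fin T => d p.1 p.2) μ)
    (hatomless : ∀ k i, NoAtoms (μ.map (d k i)))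
    (α : Fin T → Fin m → ℕ) (hα : Function.Injective α) :
    ∀ᵐ ω ∂μ,
      IsUnit (Matrix.of fun i j : Fin T =>
        ((Finset.univ.noncommProd
            (fun k => (Matrix.diagonal fun i' => d k i' ω) ^ (α j k))
            (fun a _ b _ _ => Commute.pow_pow
              (by simp [Commute, SemiconjBy, Matrix.diagonal_mul_diagonal, mul_comm]) _ _)) *ᵥ
          (1 : Fin T → ℝ)) i) := by
  classical
  set ν : Fin m × Fin T → Measure ℝ := fun p => μ.map (d p.1 p.2) with hν
  haveI : ∀ p : Fin m × Fin T, IsProbabilityMeasure (ν p) :=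
    fun p => Measure.isProbabilityMeasure_map (hmeas p.1 p.2).aemeasurable
  haveI : ∀ p : Fin m × Fin T, NoAtoms (ν p) := fun p => hatomless p.1 p.2
  set F : Ω → (Fin m × Fin T) → ℝ := fun ω p => d p.1 p.2 ω with hF
  have hFm : Measurable F := measurable_pi_lambda _ fun p => hmeas p.1 p.2
  have hmap : Measure.pi ν = μ.map F := by
    refine Measure.pi_eq fun s hs => ?_
    rw [Measure.map_apply hFm (MeasurableSet.univ_pi hs)]
    have hpre : F ⁻¹' Set.pi Set.univ s =
        ⋂ p ∈ (Finset.univ : Finset (Fin m × Fin T)), (fun ω => d p.1 p.2 ω) ⁻¹' s p := by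
      ext ω; simp [Set.mem_pi, hF]
    rw [hpre, hindep.measure_inter_preimage_eq_mul Finset.univ (fun p _ => hs p)]
    exact (Finset.prod_congr rfl fun p _ => by
      rw [hν]; rw [Measure.map_apply (hmeas p.1 p.2) (hs p)]).symm
  set P : MvPolynomial (Fin m × Fin T) ℝ :=
    (Matrix.of fun i j : Fin T =>
      ∏ k, (MvPolynomial.X (k, i) : MvPolynomial (Fin m × Fin T) ℝ) ^ (α j k)).det with hP
  have hP0 : P ≠ 0 := det_monomial_ne_zero m T α hα
  have hSm : MeasurableSet {x : (Fin m × Fin T) → ℝ | MvPolynomial.eval x P = 0} :=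
    (measurable_eval_pi P) (measurableSet_singleton 0)
  have hnull : μ {ω | MvPolynomial.eval (F ω) P = 0} = 0 := by
    have h1 := pi_eval_zero_null' ν (fun p => hatomless p.1 p.2) P hP0
    rw [hmap, Measure.map_apply hFm hSm] at h1
    exact h1
  rw [ae_iff]
  refine measure_mono_null ?_ hnull
  intro ω hω
  simp only [Set.mem_setOf_eq] at hω ⊢
  by_contra hev
  apply hω
  -- the random matrix equals the evaluated polynomial matrix
  have hmat : (Matrix.of fun i j : Fin T =>
        ((Finset.univ.noncommProd
            (fun k => (Matrix.diagonal fun i' => d k i' ω) ^ (α j k))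
            (fun a _ b _ _ => Commute.pow_pow
              (by simp [Commute, SemiconjBy, Matrix.diagonal_mul_diagonal, mul_comm]) _ _)) *ᵥ
          (1 : Fin T → ℝ)) i)
      = (Matrix.of fun i j : Fin T =>
          ∏ k, (MvPolynomial.X (k, i) : MvPolynomial (Fin m × Fin T) ℝ) ^ (α j k)).map
        (MvPolynomial.eval (F ω)) := by
    ext i j
    rw [Matrix.map_apply, Matrix.of_apply, Matrix.of_apply]
    refine (congrArg (fun M => (M *ᵥ (1 : Fin T → ℝ)) i)
      (noncommProd_diag_pow (fun k => fun i' => d k i' ω) (fun k => α j k) _)).trans ?_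
    rw [Matrix.mulVec_diagonal]
    simp [hF]
  rw [Matrix.isUnit_iff_isUnit_det, isUnit_iff_ne_zero]
  intro hdet0
  apply hev
  rw [hmat, ← RingHom.mapMatrix_apply] at hdet0
  rw [hP, RingHom.map_det]
  exact hdet0
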